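/- Let k be an uncountable algebraically closed field, let A be a k-algebra with dim_k(A) < |k|, and let F be an algebraically closed field extension of k with |F| = |k|. Then there is a ring isomorphism A ⊗_k F ≅ A which maps the subfield F = k ⊗_k F of A ⊗_k F bijectively onto the subfield k of A. -/

import Mathlib

open scoped TensorProduct
open Cardinal

universe u

/-- A transcendence basis has the cardinality of the field, when the base is smaller. -/
lemma aux_card_tb {R K : Type u} [CommRing R] [Nontrivial R] [Field K] [Algebra R K]
    [IsAlgClosed K] {ι : Type u} {v : ι → K} (hv : IsTranscendenceBasis R v)
    (hR : #R < #K) (hK : ℵ₀ < #K) : #ι = #K := by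
  have h1 := IsAlgClosed.cardinal_le_max_transcendence_basis v hv
  simp only [lift_id] at h1
  refine le_antisymm (mk_le_of_injective hv.1.injective) ?_
  by_contra h
  push_neg at h
  exact absurd (h1.trans_lt (max_lt (max_lt hR h) hK)) (lt_irrefl _)

/-- Isomorphism of algebraically closed fields from equipotent transcendence bases,
fixing the base ring. -/
noncomputable def aux_equiv {R K L : Type u} [CommRing R] [Field K] [Algebra R K]
    [Field L] [Algebra R L] [IsAlgClosed K] [IsAlgClosed L] {ι κ : Type u}
    (v : ι → K) (w : κ → L) (e : ι ≃ κ)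
    (hv : IsTranscendenceBasis R v) (hw : IsTranscendenceBasis R w) :
    { σ : K ≃+* L // ∀ r : R, σ (algebraMap R K r) = algebraMap R L r } := by
  letI := IsAlgClosed.isAlgClosure_of_transcendence_basis v hv
  letI := IsAlgClosed.isAlgClosure_of_transcendence_basis w hw
  let e1 : Algebra.adjoin R (Set.range v) ≃ₐ[R] Algebra.adjoin R (Set.range w) :=
    (hv.1.aevalEquiv.symm.trans (MvPolynomial.renameEquiv R e)).trans hw.1.aevalEquiv
  refine ⟨IsAlgClosure.equivOfEquiv K L e1.toRingEquiv, fun r => ?_⟩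
  rw [IsScalarTower.algebraMap_apply R (Algebra.adjoin R (Set.range v)) K r,
    IsAlgClosure.equivOfEquiv_algebraMap]
  show algebraMap _ L (e1 (algebraMap R _ r)) = _
  rw [AlgEquiv.commutes, ← IsScalarTower.algebraMap_apply]

theorem stmt0 (k A F : Type u) [Field k] [IsAlgClosed k] [Ring A] [Algebra k A]
    [Field F] [Algebra k F] [IsAlgClosed F]
    (hk : Cardinal.aleph0 < Cardinal.mk k)
    (hA : Module.rank k A < Cardinal.mk k)
    (hF : Cardinal.mk F = Cardinal.mk k) :
    ∃ e : (A ⊗[k] F) ≃+* A,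
      e '' (Set.range fun f : F => (1 : A) ⊗ₜ[k] f) = Set.range (algebraMap k A) := by
  classical
  let b := Module.Basis.ofVectorSpace k A
  set ι := Module.Basis.ofVectorSpaceIndex k A with hι
  -- the set of structure constants (and coordinates of 1)
  let S : Set k := (Set.range fun p : ι × ι × ι => b.repr (b p.1 * b p.2.1) p.2.2) ∪
    (Set.range fun i : ι => b.repr 1 i)
  let k₀ : Subfield k := Subfield.closure S
  letI : Algebra k₀ F := ((algebraMap k F).comp (algebraMap k₀ k)).toAlgebra
  have hιk : #ι < #k := by rw [b.mk_eq_rank'']; exact hA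
  have hk₀ : #k₀ < #k := by
    have hS : #S ≤ max #ι ℵ₀ := by
      have h1 : #S ≤ #(ι × ι × ι) + #ι :=
        (mk_union_le _ _).trans (add_le_add (mk_range_le) (mk_range_le))
      have hm : ℵ₀ ≤ max #ι ℵ₀ := le_max_right _ _
      have h2 : #(ι × ι × ι) ≤ max #ι ℵ₀ := by
        rw [mk_prod, mk_prod]
        simp only [lift_id]
        calc #ι * (#ι * #ι) ≤ (max #ι ℵ₀) * ((max #ι ℵ₀) * (max #ι ℵ₀)) := by
              gcongr <;> exact le_max_left _ _
          _ = max #ι ℵ₀ := by rw [mul_eq_self hm, mul_eq_self hm]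
      calc #S ≤ #(ι × ι × ι) + #ι := h1
        _ ≤ max #ι ℵ₀ + max #ι ℵ₀ := add_le_add h2 (le_max_left _ _)
        _ = max #ι ℵ₀ := add_eq_self hm
    calc #k₀ ≤ max #S ℵ₀ := Subfield.cardinalMk_closure_le_max S
      _ ≤ max (max #ι ℵ₀) ℵ₀ := by gcongr
      _ = max #ι ℵ₀ := by rw [max_assoc, max_self]
      _ < #k := max_lt hιk hk
  have hk₀F : #k₀ < #F := by rw [hF]; exact hk₀
  have hkF : ℵ₀ < #F := by rw [hF]; exact hk
  haveI : FaithfulSMul k₀ k := (faithfulSMul_iff_algebraMap_injective k₀ k).mpr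
    (show Function.Injective (algebraMap k₀ k) from RingHom.injective _)
  obtain ⟨s, hs⟩ := exists_isTranscendenceBasis k₀ k
  haveI : @FaithfulSMul k₀ F Algebra.toSMul := (faithfulSMul_iff_algebraMap_injective k₀ F).mpr
    (show Function.Injective (algebraMap k₀ F) from RingHom.injective _)
  obtain ⟨t, ht⟩ := exists_isTranscendenceBasis k₀ F
  have hst : #t = #s := by
    rw [aux_card_tb ht hk₀F hkF, aux_card_tb hs hk₀ hk, hF]
  obtain ⟨e0⟩ := Cardinal.eq.1 hst
  obtain ⟨σ, hσ⟩ := aux_equiv (Subtype.val : t → F) (Subtype.val : s → k) e0 ht hs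
  have hσ' : ∀ x : k, x ∈ k₀ → σ (algebraMap k F x) = x := by
    intro x hx
    have := hσ ⟨x, hx⟩
    rwa [show algebraMap k₀ F ⟨x, hx⟩ = algebraMap k F x from rfl,
      show algebraMap k₀ k ⟨x, hx⟩ = x from rfl] at this
  -- the basis of F ⊗ A over F
  let bF : Module.Basis ι F (F ⊗[k] A) := Algebra.TensorProduct.basis F b
  let φ : (F ⊗[k] A) ≃+ A :=
    bF.repr.toAddEquiv.trans ((Finsupp.mapRange.addEquiv σ.toAddEquiv).trans
      b.repr.symm.toAddEquiv)
  have happ : ∀ x, φ x = b.repr.symm (Finsupp.mapRange σ (map_zero σ) (bF.repr x)) :=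
    fun _ => rfl
  have hφ : ∀ (f : F) (a : A), (∀ l, b.repr a l ∈ k₀) → φ (f ⊗ₜ[k] a) = σ f • a := by
    intro f a ha
    rw [happ, Algebra.TensorProduct.basis_repr_tmul]
    have hmr : Finsupp.mapRange σ (map_zero σ)
        (f • Finsupp.mapRange (algebraMap k F) (map_zero _) (b.repr a)) = σ f • b.repr a := by
      ext l
      rw [Finsupp.mapRange_apply, Finsupp.smul_apply, Finsupp.mapRange_apply,
        Finsupp.smul_apply, smul_eq_mul, smul_eq_mul, map_mul, hσ' _ (ha l)]
    rw [hmr, map_smul, LinearEquiv.symm_apply_apply]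
  have hone : ∀ l, b.repr 1 l ∈ k₀ := fun l => Subfield.subset_closure (Or.inr ⟨l, rfl⟩)
  have hstruct : ∀ i j : ι, ∀ l, b.repr (b i * b j) l ∈ k₀ := fun i j l =>
    Subfield.subset_closure (Or.inl ⟨(i, j, l), rfl⟩)
  have hbasis : ∀ i : ι, ∀ l, b.repr (b i) l ∈ k₀ := by
    intro i l
    rw [b.repr_self, Finsupp.single_apply]
    split <;> [exact one_mem _; exact zero_mem _]
  have hφb : ∀ (f : F) (i : ι), φ (f ⊗ₜ[k] (b i : A)) = σ f • (b i : A) :=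
    fun f i => hφ f (b i) (hbasis i)
  have hspan : ∀ x : F ⊗[k] A,
      x = ∑ i ∈ (bF.repr x).support, (bF.repr x i) ⊗ₜ[k] (b i : A) := by
    intro x
    conv_lhs => rw [← bF.linearCombination_repr x]
    rw [Finsupp.linearCombination_apply, Finsupp.sum]
    exact Finset.sum_congr rfl fun i _ =>
      Algebra.TensorProduct.basis_repr_symm_apply' b _ i
  have hmul : ∀ x y : F ⊗[k] A, φ (x * y) = φ x * φ y := by
    have key : ∀ (i j : ι) (f g : F),
        φ ((f ⊗ₜ[k] (b i : A)) * (g ⊗ₜ[k] (b j : A))) =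
          φ (f ⊗ₜ[k] (b i : A)) * φ (g ⊗ₜ[k] (b j : A)) := by
      intro i j f g
      rw [Algebra.TensorProduct.tmul_mul_tmul, hφ (f * g) _ (hstruct i j), hφb, hφb,
        map_mul, Algebra.smul_mul_assoc, Algebra.mul_smul_comm, smul_smul]
    intro x y
    rw [hspan x, hspan y]
    rw [Finset.sum_mul_sum]
    rw [map_sum, map_sum, map_sum, Finset.sum_mul_sum]
    refine Finset.sum_congr rfl fun i _ => ?_
    rw [map_sum]
    exact Finset.sum_congr rfl fun j _ => key i j _ _
  let eA : (F ⊗[k] A) ≃+* A :=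
    { φ.toEquiv with map_mul' := hmul, map_add' := fun x y => map_add φ x y }
  refine ⟨((Algebra.TensorProduct.comm k A F).toRingEquiv).trans eA, ?_⟩
  have he1 : ∀ f : F,
      ((Algebra.TensorProduct.comm k A F).toRingEquiv).trans eA ((1 : A) ⊗ₜ[k] f) =
        algebraMap k A (σ f) := by
    intro f
    have h1 : ((Algebra.TensorProduct.comm k A F).toRingEquiv).trans eA ((1 : A) ⊗ₜ[k] f) =
        φ (f ⊗ₜ[k] (1 : A)) := rfl
    rw [h1, hφ f 1 hone, Algebra.algebraMap_eq_smul_one]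
  ext a
  simp only [Set.mem_image, Set.mem_range]
  constructor
  · rintro ⟨x, ⟨f, rfl⟩, rfl⟩
    exact ⟨σ f, (he1 f).symm⟩
  · rintro ⟨c, rfl⟩
    exact ⟨(1 : A) ⊗ₜ[k] (σ.symm c), ⟨σ.symm c, rfl⟩, by rw [he1, RingEquiv.apply_symm_apply]⟩
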